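/- For a 2×2 skew-symmetrizable matrix B = [[0,b],[-c,0]] with b,c > 0, the mutation class of B (under μ_1, μ_2) is finite if and only if bc ≤ 3, and the associated cluster pattern has finitely many seeds if and only if bc ≤ 3. -/

import Mathlib

/-- Fomin–Zelevinsky matrix mutation at index `k`. -/
def mutate {n : ℕ} (k : Fin n) (B : Matrix (Fin n) (Fin n) ℤ) : Matrix (Fin n) (Fin n) ℤ :=
  Matrix.of fun i j =>
    if i = k ∨ j = k then -B i j
    else B i j + Int.sign (B i k) * max 0 (B i k * B k j)

/-- `B` is skew-symmetrizable: there is a positive diagonal `d` with `dᵢ bᵢⱼ = -dⱼ bⱼᵢ`. -/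
def IsSkewSymmetrizable {n : ℕ} (B : Matrix (Fin n) (Fin n) ℤ) : Prop :=
  ∃ d : Fin n → ℤ, (∀ i, 0 < d i) ∧ ∀ i j, d i * B i j = -(d j * B j i)

/-- The exchange relation: the new cluster variable obtained by mutating the
cluster `x` with exchange matrix `B` at index `k`. -/
noncomputable def exch {n : ℕ} {F : Type*} [Field F] (B : Matrix (Fin n) (Fin n) ℤ)
    (k : Fin n) (x : Fin n → F) : F :=
  ((∏ j, x j ^ (B j k).toNat) + ∏ j, x j ^ (-B j k).toNat) / x k

/-- Seed mutation at index `k`: exchange relation on the cluster, matrix mutation on `B`. -/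
noncomputable def seedMut {n : ℕ} {F : Type*} [Field F] (k : Fin n)
    (s : (Fin n → F) × Matrix (Fin n) (Fin n) ℤ) :
    (Fin n → F) × Matrix (Fin n) (Fin n) ℤ :=
  (Function.update s.1 k (exch s.2 k s.1), mutate k s.2)

/-- Action of a mutation sequence (list in order of application, leftmost first). -/
noncomputable def seqAct {n : ℕ} {F : Type*} [Field F] (l : List (Fin n))
    (s : (Fin n → F) × Matrix (Fin n) (Fin n) ℤ) :
    (Fin n → F) × Matrix (Fin n) (Fin n) ℤ :=
  l.foldl (fun t k => seedMut k t) s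

section General

variable {F : Type*} [Field F]

lemma exch_neg {n : ℕ} (M : Matrix (Fin n) (Fin n) ℤ) (k : Fin n) (v : Fin n → F) :
    exch (-M) k v = exch M k v := by
  simp [exch, add_comm]

lemma exch_zero (b c : ℤ) (hc : 0 ≤ c) (v : Fin 2 → F) :
    exch !![0, b; -c, 0] 0 v = (1 + v 1 ^ c.toNat) / v 0 := by
  simp [exch, Fin.prod_univ_two, Int.toNat_eq_zero.2 (neg_nonpos.2 hc)]

lemma exch_one (b c : ℤ) (hb : 0 ≤ b) (v : Fin 2 → F) :
    exch !![0, b; -c, 0] 1 v = (v 0 ^ b.toNat + 1) / v 1 := by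
  simp [exch, Fin.prod_univ_two, Int.toNat_eq_zero.2 (neg_nonpos.2 hb)]

lemma neg_Bmat (b c : ℤ) : -(!![0, b; -c, 0] : Matrix (Fin 2) (Fin 2) ℤ) = !![0, -b; c, 0] := by
  ext i j
  fin_cases i <;> fin_cases j <;> simp

lemma mutate_Bmat (b c : ℤ) (h : 0 ≤ b * c) (k : Fin 2) :
    mutate k !![0, b; -c, 0] = !![0, -b; c, 0] := by
  have h1 : b * -c ≤ 0 := by nlinarith
  have h2 : -c * b ≤ 0 := by nlinarith
  have h3 : 0 ≤ c * b := by nlinarith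
  ext i j
  fin_cases k <;> fin_cases i <;> fin_cases j <;>
    simp [mutate, max_eq_left, h1, h2, h3, h, max_eq_left h1, max_eq_left h2]

lemma seqAct_nil (s : (Fin 2 → F) × Matrix (Fin 2) (Fin 2) ℤ) : seqAct [] s = s := rfl

lemma seqAct_cons (k : Fin 2) (l : List (Fin 2)) (s : (Fin 2 → F) × Matrix (Fin 2) (Fin 2) ℤ) :
    seqAct (k :: l) s = seqAct l (seedMut k s) := rfl

lemma seqAct_append (l₁ l₂ : List (Fin 2)) (s : (Fin 2 → F) × Matrix (Fin 2) (Fin 2) ℤ) :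
    seqAct (l₁ ++ l₂) s = seqAct l₂ (seqAct l₁ s) := List.foldl_append

lemma fin_two (k : Fin 2) : k = 0 ∨ k = 1 :=
  match k with
  | 0 => Or.inl rfl
  | 1 => Or.inr rfl

lemma update_zero (v : Fin 2 → F) (t : F) : Function.update v (0 : Fin 2) t = ![t, v 1] := by
  funext i
  fin_cases i <;> simp

lemma update_one (v : Fin 2 → F) (t : F) : Function.update v (1 : Fin 2) t = ![v 0, t] := by
  funext i
  fin_cases i <;> simp [Function.update]

end General

section Finiteness

variable {F : Type*} [Field F]

/-- If a finite list of cluster vectors contains the initial cluster and is closed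
under the exchange maps, then the seed orbit is finite. -/
lemma seedSet_finite_of_list (b c : ℤ) (hbc : 0 ≤ b * c) (x : Fin 2 → F)
    (L : List (Fin 2 → F)) (hxL : x ∈ L)
    (hcl : ∀ v ∈ L, ∀ k : Fin 2, Function.update v k (exch !![0, b; -c, 0] k v) ∈ L) :
    {s | ∃ l : List (Fin 2), seqAct l (x, !![0, b; -c, 0]) = s}.Finite := by
  set B : Matrix (Fin 2) (Fin 2) ℤ := !![0, b; -c, 0] with hB
  set B' : Matrix (Fin 2) (Fin 2) ℤ := !![0, -b; c, 0] with hB'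
  have hBneg : -B = B' := neg_Bmat b c
  have hB'neg : -B' = B := by rw [← hBneg, neg_neg]
  have hmutB : ∀ k, mutate k B = B' := mutate_Bmat b c hbc
  have hmutB' : ∀ k, mutate k B' = B := by
    intro k
    have := mutate_Bmat (-b) (-c) (by nlinarith) k
    simpa [neg_neg] using this
  have key : ∀ (l : List (Fin 2)) (s : (Fin 2 → F) × Matrix (Fin 2) (Fin 2) ℤ),
      s.1 ∈ L → (s.2 = B ∨ s.2 = B') →
      (seqAct l s).1 ∈ L ∧ ((seqAct l s).2 = B ∨ (seqAct l s).2 = B') := by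
    intro l
    induction l with
    | nil => intro s h1 h2; exact ⟨h1, h2⟩
    | cons k l ih =>
      intro s h1 h2
      rw [seqAct_cons]
      apply ih
      · show Function.update s.1 k (exch s.2 k s.1) ∈ L
        rcases h2 with h2 | h2
        · rw [h2]; exact hcl s.1 h1 k
        · rw [h2, ← hBneg, exch_neg]; exact hcl s.1 h1 k
      · show mutate k s.2 = B ∨ mutate k s.2 = B'
        rcases h2 with h2 | h2
        · right; rw [h2]; exact hmutB k
        · left; rw [h2]; exact hmutB' k
  apply Set.Finite.subset (Set.Finite.prod (L.finite_toSet)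
    ((Set.finite_singleton B).insert B'))
  rintro s ⟨l, rfl⟩
  have := key l (x, B) hxL (Or.inl rfl)
  refine Set.mem_prod.2 ⟨this.1, ?_⟩
  rcases this.2 with h | h
  · exact Set.mem_insert_iff.2 (Or.inr (by simp [h]))
  · exact Set.mem_insert_iff.2 (Or.inl h)

/-- The matrix component of any reachable seed is `±B`. -/
lemma mat_reachable (b c : ℤ) (hbc : 0 ≤ b * c) (x : Fin 2 → F) (l : List (Fin 2)) :
    (seqAct l (x, !![0, b; -c, 0])).2 = !![0, b; -c, 0] ∨
      (seqAct l (x, !![0, b; -c, 0])).2 = !![0, -b; c, 0] := by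
  have hmutB : ∀ k, mutate k !![0, b; -c, 0] = !![0, -b; c, 0] := mutate_Bmat b c hbc
  have hmutB' : ∀ k, mutate k !![0, -b; c, 0] = !![0, b; -c, 0] := by
    intro k
    have := mutate_Bmat (-b) (-c) (by nlinarith) k
    simpa [neg_neg] using this
  have key : ∀ (l : List (Fin 2)) (s : (Fin 2 → F) × Matrix (Fin 2) (Fin 2) ℤ),
      (s.2 = !![0, b; -c, 0] ∨ s.2 = !![0, -b; c, 0]) →
      ((seqAct l s).2 = !![0, b; -c, 0] ∨ (seqAct l s).2 = !![0, -b; c, 0]) := by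
    intro l
    induction l with
    | nil => intro s h; exact h
    | cons k l ih =>
      intro s h
      rw [seqAct_cons]
      apply ih
      rcases h with h | h
      · right; show mutate k s.2 = _; rw [h]; exact hmutB k
      · left; show mutate k s.2 = _; rw [h]; exact hmutB' k
  exact key l _ (Or.inl rfl)

lemma vec_eq (v : Fin 2 → F) : v = ![v 0, v 1] := by
  funext i; fin_cases i <;> simp

/-- seeds finite → cluster variables finite -/
lemma vars_finite_of_seeds_finite (x : Fin 2 → F) (B : Matrix (Fin 2) (Fin 2) ℤ)
    (h : {s | ∃ l : List (Fin 2), seqAct l (x, B) = s}.Finite) :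
    {y : F | ∃ (l : List (Fin 2)) (i : Fin 2), (seqAct l (x, B)).1 i = y}.Finite := by
  apply Set.Finite.subset ((h.prod (Set.finite_univ (α := Fin 2))).image
    (fun p => p.1.1 p.2))
  rintro y ⟨l, i, rfl⟩
  exact ⟨(seqAct l (x, B), i), ⟨⟨l, rfl⟩, Set.mem_univ _⟩, rfl⟩

/-- cluster variables finite → seeds finite -/
lemma seeds_finite_of_vars_finite (b c : ℤ) (hbc : 0 ≤ b * c) (x : Fin 2 → F)
    (h : {y : F | ∃ (l : List (Fin 2)) (i : Fin 2),
        (seqAct l (x, !![0, b; -c, 0])).1 i = y}.Finite) :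
    {s | ∃ l : List (Fin 2), seqAct l (x, !![0, b; -c, 0]) = s}.Finite := by
  have hMfin : ({!![0, b; -c, 0], !![0, -b; c, 0]} : Set (Matrix (Fin 2) (Fin 2) ℤ)).Finite :=
    (Set.finite_singleton _).insert _
  have hbig := ((h.prod h).prod hMfin).image
      (fun p : (F × F) × Matrix (Fin 2) (Fin 2) ℤ => (![p.1.1, p.1.2], p.2))
  apply Set.Finite.subset hbig
  rintro s ⟨l, rfl⟩
  refine ⟨(((seqAct l (x, !![0, b; -c, 0])).1 0, (seqAct l (x, !![0, b; -c, 0])).1 1),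
      (seqAct l (x, !![0, b; -c, 0])).2), ⟨⟨⟨l, 0, rfl⟩, ⟨l, 1, rfl⟩⟩, ?_⟩, ?_⟩
  · rcases mat_reachable b c hbc x l with hm | hm
    · exact Set.mem_insert_iff.2 (Or.inl hm)
    · exact Set.mem_insert_iff.2 (Or.inr (by simp [hm]))
  · simp only
    rw [← vec_eq]

end Finiteness

section Sequences

variable {F : Type*} [Field F]

/-- The rank-2 cluster variable sequence. -/
noncomputable def zseq (e : ℕ → ℕ) (u v : F) : ℕ → F
  | 0 => u
  | 1 => v
  | n + 2 => (zseq e u v (n + 1) ^ e n + 1) / zseq e u v n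

/-- The associated degree sequence. -/
def wseq (e : ℕ → ℕ) : ℕ → ℤ
  | 0 => 0
  | 1 => 1
  | n + 2 => e n * wseq e (n + 1) - wseq e n

lemma wseq_pos_and_growth (e : ℕ → ℕ) (he1 : ∀ n, 1 ≤ e n)
    (he4 : ∀ n, 4 ≤ e n * e (n + 1)) (heper : ∀ n, e (n + 2) = e n) :
    ∀ n, 1 ≤ wseq e (n + 1) ∧ wseq e n + 1 ≤ wseq e (n + 2) := by
  intro n
  induction n using Nat.strong_induction_on with
  | _ n ih =>
    match n with
    | 0 =>
      constructor
      · simp [wseq]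
      · show wseq e 0 + 1 ≤ wseq e 2
        have : wseq e 2 = e 0 * 1 - 0 := by simp [wseq]
        have h0 := he1 0
        simp [wseq]
        omega
    | 1 =>
      have h0 := he1 0
      have h4 := he4 0
      constructor
      · show (1 : ℤ) ≤ wseq e 2
        have : wseq e 2 = e 0 * wseq e 1 - wseq e 0 := rfl
        simp [wseq] at this ⊢
        omega
      · show wseq e 1 + 1 ≤ wseq e 3
        have h3 : wseq e 3 = e 1 * wseq e 2 - wseq e 1 := rfl
        have h2 : wseq e 2 = e 0 * wseq e 1 - wseq e 0 := rfl
        have w0 : wseq e 0 = 0 := rfl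
        have w1 : wseq e 1 = 1 := rfl
        have e01 : (4 : ℤ) ≤ (e 0 : ℤ) * (e 1 : ℤ) := by exact_mod_cast he4 0
        rw [h3, h2, w0, w1]
        nlinarith [e01]
    | (m + 2) =>
      have ih1 := ih m (by omega)
      have ih2 := ih (m + 1) (by omega)
      -- two-step recursion : wseq (m+4) = (e m * e (m+1) - 2) * wseq (m+2) - wseq m
      have key : wseq e (m + 4) = (e m * e (m + 1) - 2) * wseq e (m + 2) - wseq e m := by
        have h4 : wseq e (m + 4) = e (m + 2) * wseq e (m + 3) - wseq e (m + 2) := rfl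
        have h3 : wseq e (m + 3) = e (m + 1) * wseq e (m + 2) - wseq e (m + 1) := rfl
        have h2 : wseq e (m + 2) = e m * wseq e (m + 1) - wseq e m := rfl
        rw [h4, h3, heper m]
        have : (e m : ℤ) * wseq e (m + 1) = wseq e (m + 2) + wseq e m := by rw [h2]; ring
        push_cast
        push_cast at this
        nlinarith [this]
      constructor
      · have hA : wseq e (m + 1) + 1 ≤ wseq e (m + 3) := ih2.2
        have hB : (1 : ℤ) ≤ wseq e (m + 1) := ih1.1
        show (1 : ℤ) ≤ wseq e (m + 3)
        omega
      · show wseq e (m + 2) + 1 ≤ wseq e (m + 4)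
        rw [key]
        have h1 : (1 : ℤ) ≤ wseq e (m + 2) := ih2.1
        have h2 : wseq e m + 1 ≤ wseq e (m + 2) := ih1.2
        have h4 : (4 : ℤ) ≤ (e m : ℤ) * (e (m + 1) : ℤ) := by exact_mod_cast he4 m
        nlinarith

end Sequences

section Degree

open MvPolynomial

/-- Degree of a bivariate polynomial in the second variable. -/
noncomputable def Dg (p : MvPolynomial (Fin 2) ℚ) : ℕ :=
  ((finSuccEquiv ℚ 1) (rename (Equiv.swap 0 1) p)).natDegree

lemma Dg_X1 : Dg (X 1) = 1 := by
  have h : (Equiv.swap (0 : Fin 2) 1) 1 = 0 := by simp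
  rw [Dg, rename_X, h, finSuccEquiv_X_zero, Polynomial.natDegree_X]

lemma Dg_X0 : Dg (X 0) = 0 := by
  have h : (Equiv.swap (0 : Fin 2) 1) 0 = 1 := by simp
  have h1 : (1 : Fin 2) = (Fin.succ 0 : Fin 2) := rfl
  rw [Dg, rename_X, h, h1, finSuccEquiv_X_succ, Polynomial.natDegree_C]

lemma Dg_one : Dg 1 = 0 := by
  simp [Dg]

lemma aux_ne_zero {p : MvPolynomial (Fin 2) ℚ} (hp : p ≠ 0) :
    (finSuccEquiv ℚ 1) (rename (Equiv.swap 0 1) p) ≠ 0 := by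
  simp only [ne_eq, EmbeddingLike.map_eq_zero_iff]
  exact fun h => hp ((rename_injective _ (Equiv.swap (0:Fin 2) 1).injective).eq_iff.1
    (by simpa using h))

lemma Dg_mul {p q : MvPolynomial (Fin 2) ℚ} (hp : p ≠ 0) (hq : q ≠ 0) :
    Dg (p * q) = Dg p + Dg q := by
  unfold Dg
  rw [map_mul, map_mul, Polynomial.natDegree_mul (aux_ne_zero hp) (aux_ne_zero hq)]

lemma Dg_pow {p : MvPolynomial (Fin 2) ℚ} (e : ℕ) : Dg (p ^ e) = e * Dg p := by
  unfold Dg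
  rw [map_pow, map_pow, Polynomial.natDegree_pow]

lemma Dg_add_lt {p q : MvPolynomial (Fin 2) ℚ} (h : Dg q < Dg p) : Dg (p + q) = Dg p := by
  unfold Dg
  rw [map_add, map_add]
  exact Polynomial.natDegree_add_eq_left_of_natDegree_lt h

lemma ne_zero_of_Dg_pos {p : MvPolynomial (Fin 2) ℚ} (h : 0 < Dg p) : p ≠ 0 := by
  intro hp
  rw [hp] at h
  simp [Dg] at h

end Degree

section Rep

open MvPolynomial

variable {F : Type*} [Field F] [Algebra ℚ F]

lemma zseq_two {F : Type*} [Field F] (e : ℕ → ℕ) (u v : F) (n : ℕ) :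
    zseq e u v (n + 2) = (zseq e u v (n + 1) ^ e n + 1) / zseq e u v n := rfl

lemma wseq_two (e : ℕ → ℕ) (n : ℕ) :
    wseq e (n + 2) = e n * wseq e (n + 1) - wseq e n := rfl

/-- Laurent-type representation of the cluster variables, with degree control. -/
lemma rep_lemma (x : Fin 2 → F) (hx : AlgebraicIndependent ℚ x) (e : ℕ → ℕ)
    (he1 : ∀ n, 1 ≤ e n) (hw : ∀ n, 1 ≤ wseq e (n + 1)) :
    ∀ n, ∃ p q : MvPolynomial (Fin 2) ℚ, p ≠ 0 ∧ q ≠ 0 ∧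
      zseq e (x 0) (x 1) n * aeval x q = aeval x p ∧
      (Dg p : ℤ) = Dg q + wseq e n := by
  have hψ : ∀ r : MvPolynomial (Fin 2) ℚ, r ≠ 0 → aeval x r ≠ 0 := by
    intro r hr h0
    exact hr (hx (show aeval x r = aeval x 0 by simpa using h0))
  have main : ∀ n, (∃ p q : MvPolynomial (Fin 2) ℚ, p ≠ 0 ∧ q ≠ 0 ∧
      zseq e (x 0) (x 1) n * aeval x q = aeval x p ∧ (Dg p : ℤ) = Dg q + wseq e n) ∧
      (∃ p q : MvPolynomial (Fin 2) ℚ, p ≠ 0 ∧ q ≠ 0 ∧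
      zseq e (x 0) (x 1) (n + 1) * aeval x q = aeval x p ∧
      (Dg p : ℤ) = Dg q + wseq e (n + 1)) := by
    intro n
    induction n with
    | zero =>
      constructor
      · exact ⟨X 0, 1, X_ne_zero _, one_ne_zero, by simp [zseq], by simp [Dg_X0, Dg_one]; rfl⟩
      · exact ⟨X 1, 1, X_ne_zero _, one_ne_zero, by simp [zseq], by simp [Dg_X1, Dg_one]; rfl⟩
    | succ n ih =>
      refine ⟨ih.2, ?_⟩
      obtain ⟨p, q, hp, hq, hz, hd⟩ := ih.1
      obtain ⟨p', q', hp', hq', hz', hd'⟩ := ih.2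
      set E := e n with hE
      have hE1 : 1 ≤ E := he1 n
      have hwn : (1 : ℤ) ≤ wseq e (n + 1) := hw n
      have hdlt : Dg q' < Dg p' := by
        have : (Dg q' : ℤ) < Dg p' := by rw [hd']; linarith
        exact_mod_cast this
      have hdltE : Dg (q' ^ E) < Dg (p' ^ E) := by
        rw [Dg_pow, Dg_pow]
        exact mul_lt_mul_of_pos_left hdlt (by omega)
      set S := p' ^ E + q' ^ E with hS
      have hDgS : Dg S = E * Dg p' := by rw [hS, Dg_add_lt hdltE, Dg_pow]
      have hSne : S ≠ 0 := by
        apply ne_zero_of_Dg_pos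
        rw [hDgS]
        have : 1 ≤ Dg p' := by omega
        exact Nat.mul_pos (by omega) (by omega)
      refine ⟨S * q, q' ^ E * p, mul_ne_zero hSne hq, mul_ne_zero (pow_ne_zero _ hq') hp,
        ?_, ?_⟩
      · -- field identity
        have hzn : zseq e (x 0) (x 1) n ≠ 0 := by
          intro h0
          rw [h0, zero_mul] at hz
          exact hψ p hp hz.symm
        rw [zseq_two]
        rw [map_mul, map_mul, map_pow, map_add, map_pow, map_pow]
        have h1 : zseq e (x 0) (x 1) (n + 1) ^ E * (aeval x q') ^ E = (aeval x p') ^ E := by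
          rw [← mul_pow, hz']
        rw [div_mul_eq_mul_div, div_eq_iff hzn]
        linear_combination (-(zseq e (x 0) (x 1) (n + 1) ^ E + 1) * (aeval x q') ^ E) * hz +
          (zseq e (x 0) (x 1) n * aeval x q) * h1
      · -- degree identity
        rw [Dg_mul hSne hq, Dg_mul (pow_ne_zero _ hq') hp, hDgS, Dg_pow, wseq_two]
        push_cast
        linear_combination (E : ℤ) * hd' - hd
  exact fun n => (main n).1

end Rep

section AltWord

variable {F : Type*} [Field F]

/-- Exponent sequence for `(b, c)`. -/
def eBC (b c : ℤ) (n : ℕ) : ℕ := if Even n then c.toNat else b.toNat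

/-- The alternating mutation word `[0, 1, 0, 1, ...]` of length `n`. -/
def altWord (n : ℕ) : List (Fin 2) :=
  (List.range n).map fun i => if Even i then (0 : Fin 2) else 1

lemma seqAct_altWord (b c : ℤ) (hb : 0 < b) (hc : 0 < c) (x : Fin 2 → F) :
    ∀ n, seqAct (altWord n) (x, !![0, b; -c, 0]) =
      if Even n then
        (![zseq (eBC b c) (x 0) (x 1) n, zseq (eBC b c) (x 0) (x 1) (n + 1)], !![0, b; -c, 0])
      else
        (![zseq (eBC b c) (x 0) (x 1) (n + 1), zseq (eBC b c) (x 0) (x 1) n], !![0, -b; c, 0]) := by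
  have hbc : (0 : ℤ) ≤ b * c := by positivity
  set z := zseq (eBC b c) (x 0) (x 1) with hzdef
  intro n
  induction n with
  | zero =>
    simp only [if_pos (Even.zero)]
    rw [altWord, List.range_zero, List.map_nil, seqAct_nil]
    have : x = ![z 0, z 1] := by
      rw [show z 0 = x 0 from rfl, show z 1 = x 1 from rfl]
      exact vec_eq x
    rw [← this]
  | succ n ih =>
    have hsplit : altWord (n + 1) = altWord n ++ [if Even n then (0 : Fin 2) else 1] := by
      rw [altWord, List.range_succ, List.map_append]
      rfl
    rw [hsplit, seqAct_append, ih]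
    rcases Nat.even_or_odd n with he | ho
    · rw [if_pos he, if_pos he, if_neg (Nat.not_even_iff_odd.2 (Even.add_one he))]
      show seedMut 0 _ = _
      rw [seedMut]
      simp only
      rw [exch_zero b c (le_of_lt hc)]
      rw [update_zero]
      have hv0 : (![z n, z (n + 1)]) 0 = z n := rfl
      have hv1 : (![z n, z (n + 1)]) 1 = z (n + 1) := rfl
      rw [hv0, hv1, mutate_Bmat b c hbc]
      have hz2 : (1 + z (n + 1) ^ c.toNat) / z n = z (n + 2) := by
        rw [hzdef, zseq_two]
        rw [show eBC b c n = c.toNat from if_pos he]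
        ring
      rw [hz2]
    · rw [if_neg (Nat.not_even_iff_odd.2 ho), if_pos (Odd.add_one ho),
        if_neg (Nat.not_even_iff_odd.2 ho)]
      show seedMut 1 _ = _
      rw [seedMut]
      simp only
      rw [← neg_Bmat b c, exch_neg, exch_one b c (le_of_lt hb)]
      rw [update_one]
      have hv0 : (![z (n + 1), z n]) 0 = z (n + 1) := rfl
      have hv1 : (![z (n + 1), z n]) 1 = z n := rfl
      rw [hv0, hv1]
      have hmut : mutate 1 (-(!![0, b; -c, 0] : Matrix (Fin 2) (Fin 2) ℤ)) = !![0, b; -c, 0] := by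
        rw [neg_Bmat b c]
        have := mutate_Bmat (-b) (-c) (by nlinarith) 1
        simpa [neg_neg] using this
      rw [hmut]
      have hz2 : (z (n + 1) ^ b.toNat + 1) / z n = z (n + 2) := by
        rw [hzdef, zseq_two]
        rw [show eBC b c n = b.toNat from if_neg (Nat.not_even_iff_odd.2 ho)]
      rw [hz2]

end AltWord

section Infinite

open MvPolynomial

variable {F : Type*} [Field F] [Algebra ℚ F]

lemma vars_infinite (x : Fin 2 → F) (hx : AlgebraicIndependent ℚ x)
    (b c : ℤ) (hb : 0 < b) (hc : 0 < c) (h4 : 4 ≤ b * c) :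
    {y : F | ∃ (l : List (Fin 2)) (i : Fin 2),
        (seqAct l (x, !![0, b; -c, 0])).1 i = y}.Infinite := by
  set e := eBC b c with he
  have he1 : ∀ n, 1 ≤ e n := by
    intro n
    rw [he, eBC]
    split <;> omega
  have he4 : ∀ n, 4 ≤ e n * e (n + 1) := by
    have hmulcomm : c.toNat * b.toNat = b.toNat * c.toNat := Nat.mul_comm _ _
    have hbc : 4 ≤ b.toNat * c.toNat := by
      have h1 : ((b.toNat : ℤ)) * (c.toNat : ℤ) = b * c := by
        rw [Int.toNat_of_nonneg hb.le, Int.toNat_of_nonneg hc.le]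
      have : (4 : ℤ) ≤ (b.toNat : ℤ) * (c.toNat : ℤ) := by rw [h1]; exact h4
      exact_mod_cast this
    intro n
    rw [he, eBC, eBC]
    rcases Nat.even_or_odd n with hp | hp
    · rw [if_pos hp, if_neg (by simpa using (Even.add_one hp))]
      omega
    · rw [if_neg (Nat.not_even_iff_odd.2 hp), if_pos (Odd.add_one hp)]
      omega

  have heper : ∀ n, e (n + 2) = e n := by
    intro n
    rw [he, eBC, eBC]
    have : Even (n + 2) ↔ Even n := by
      constructor
      · intro h; rcases h with ⟨r, hr⟩; exact ⟨r - 1, by omega⟩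
      · intro h; rcases h with ⟨r, hr⟩; exact ⟨r + 1, by omega⟩
    rcases Nat.even_or_odd n with hp | hp
    · rw [if_pos hp, if_pos (this.2 hp)]
    · rw [if_neg (Nat.not_even_iff_odd.2 hp), if_neg (fun hh => (Nat.not_even_iff_odd.2 hp) (this.1 hh))]
  have hwpg := wseq_pos_and_growth e he1 he4 heper
  have hw : ∀ n, 1 ≤ wseq e (n + 1) := fun n => (hwpg n).1
  have hsm : StrictMono (fun m => wseq e (2 * m + 1)) := by
    apply strictMono_nat_of_lt_succ
    intro m
    have h := (hwpg (2 * m + 1)).2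
    show wseq e (2 * m + 1) < wseq e (2 * (m + 1) + 1)
    have : wseq e (2 * (m + 1) + 1) = wseq e (2 * m + 1 + 2) := by norm_num; ring_nf
    rw [this]
    omega
  have hrep := rep_lemma x hx e he1 hw
  have hψinj : ∀ r s : MvPolynomial (Fin 2) ℚ, aeval x r = aeval x s → r = s := fun r s hrs => hx hrs
  have hinj : Function.Injective (fun m => zseq e (x 0) (x 1) (2 * m + 1)) := by
    intro a b' hab
    simp only at hab
    obtain ⟨p₁, q₁, hp₁, hq₁, hz₁, hd₁⟩ := hrep (2 * a + 1)
    obtain ⟨p₂, q₂, hp₂, hq₂, hz₂, hd₂⟩ := hrep (2 * b' + 1)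
    have hcross : p₁ * q₂ = p₂ * q₁ := by
      apply hψinj
      rw [map_mul, map_mul, ← hz₁, ← hz₂, hab]
      ring
    have hDg : Dg p₁ + Dg q₂ = Dg p₂ + Dg q₁ := by
      rw [← Dg_mul hp₁ hq₂, ← Dg_mul hp₂ hq₁, hcross]
    have hww : wseq e (2 * a + 1) = wseq e (2 * b' + 1) := by
      have : (Dg p₁ : ℤ) + Dg q₂ = Dg p₂ + Dg q₁ := by exact_mod_cast hDg
      omega
    exact hsm.injective hww
  apply Set.infinite_of_injective_forall_mem hinj
  intro m
  refine ⟨altWord (2 * m + 1), 1, ?_⟩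
  rw [seqAct_altWord b c hb hc x (2 * m + 1),
    if_neg (by simp [Nat.even_add_one, parity_simps])]
  rfl

end Infinite

section Cases
variable {F : Type*} [Field F]

noncomputable def L11 (u v : F) : List (Fin 2 → F) :=
  [![u, v],
   ![(1 + v) / u, (1 + v + u) / (u * v)],
   ![(1 + v) / u, v],
   ![(1 + v + u) / (u * v), (1 + v) / u],
   ![(1 + v + u) / (u * v), (1 + u) / v],
   ![(1 + u) / v, (1 + v + u) / (u * v)],
   ![(1 + u) / v, u],
   ![v, (1 + v) / u],
   ![v, u],
   ![u, (1 + u) / v]]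

lemma closure11 (u v : F) (hne0 : (u : F) ≠ 0) (hne1 : (v : F) ≠ 0) (hne2 : (1 + v : F) ≠ 0) (hne3 : (1 + v + u : F) ≠ 0) (hne4 : (1 + u : F) ≠ 0) :
    ∀ vv ∈ L11 u v, ∀ k : Fin 2, Function.update vv k (exch !![0, 1; -1, 0] k vv) ∈ L11 u v := by
  intro vv hvv k
  have hne2' := hne2
  have hne3' := hne3
  have hne4' := hne4
  ring_nf at hne2' hne3' hne4'
  simp only [L11, List.mem_cons, List.not_mem_nil, or_false] at hvv ⊢
  rcases fin_two k with rfl | rfl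
  · rw [update_zero, exch_zero 1 1 (by norm_num)]
    rw [show ((1 : ℤ)).toNat = 1 from by simp]
    simp only [pow_one]
    rcases hvv with rfl|rfl|rfl|rfl|rfl|rfl|rfl|rfl|rfl|rfl
    · -- element -> index 2, k=0
      refine Or.inr (Or.inr (Or.inl ?_))
      funext i
      rcases fin_two i with rfl | rfl
      ·
        simp only [Matrix.cons_val_zero, Matrix.cons_val_one, Matrix.head_cons]
        try field_simp
        try ring
        try rfl
      ·
        simp only [Matrix.cons_val_zero, Matrix.cons_val_one, Matrix.head_cons]
    · -- element -> index 5, k=0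
      refine Or.inr (Or.inr (Or.inr (Or.inr (Or.inr (Or.inl ?_)))))
      funext i
      rcases fin_two i with rfl | rfl
      ·
        simp only [Matrix.cons_val_zero, Matrix.cons_val_one, Matrix.head_cons]
        try field_simp
        try ring
        try rfl
      ·
        simp only [Matrix.cons_val_zero, Matrix.cons_val_one, Matrix.head_cons]
    · -- element -> index 0, k=0
      refine Or.inl ?_
      funext i
      rcases fin_two i with rfl | rfl
      ·
        simp only [Matrix.cons_val_zero, Matrix.cons_val_one, Matrix.head_cons]
        try field_simp
        try ring
        try rfl
      ·
        simp only [Matrix.cons_val_zero, Matrix.cons_val_one, Matrix.head_cons]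
    · -- element -> index 7, k=0
      refine Or.inr (Or.inr (Or.inr (Or.inr (Or.inr (Or.inr (Or.inr (Or.inl ?_)))))))
      funext i
      rcases fin_two i with rfl | rfl
      ·
        simp only [Matrix.cons_val_zero, Matrix.cons_val_one, Matrix.head_cons]
        try field_simp
        try ring
        try rfl
      ·
        simp only [Matrix.cons_val_zero, Matrix.cons_val_one, Matrix.head_cons]
    · -- element -> index 9, k=0
      refine Or.inr (Or.inr (Or.inr (Or.inr (Or.inr (Or.inr (Or.inr (Or.inr (Or.inr ?_))))))))
      funext i
      rcases fin_two i with rfl | rfl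
      ·
        simp only [Matrix.cons_val_zero, Matrix.cons_val_one, Matrix.head_cons]
        try field_simp
        try ring
        try rfl
      ·
        simp only [Matrix.cons_val_zero, Matrix.cons_val_one, Matrix.head_cons]
    · -- element -> index 1, k=0
      refine Or.inr (Or.inl ?_)
      funext i
      rcases fin_two i with rfl | rfl
      ·
        simp only [Matrix.cons_val_zero, Matrix.cons_val_one, Matrix.head_cons]
        try field_simp
        try ring
        try rfl
      ·
        simp only [Matrix.cons_val_zero, Matrix.cons_val_one, Matrix.head_cons]
    · -- element -> index 8, k=0
      refine Or.inr (Or.inr (Or.inr (Or.inr (Or.inr (Or.inr (Or.inr (Or.inr (Or.inl ?_))))))))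
      funext i
      rcases fin_two i with rfl | rfl
      ·
        simp only [Matrix.cons_val_zero, Matrix.cons_val_one, Matrix.head_cons]
        try field_simp
        try ring
        try rfl
      ·
        simp only [Matrix.cons_val_zero, Matrix.cons_val_one, Matrix.head_cons]
    · -- element -> index 3, k=0
      refine Or.inr (Or.inr (Or.inr (Or.inl ?_)))
      funext i
      rcases fin_two i with rfl | rfl
      ·
        simp only [Matrix.cons_val_zero, Matrix.cons_val_one, Matrix.head_cons]
        try field_simp
        try ring
        try rfl
      ·
        simp only [Matrix.cons_val_zero, Matrix.cons_val_one, Matrix.head_cons]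
    · -- element -> index 6, k=0
      refine Or.inr (Or.inr (Or.inr (Or.inr (Or.inr (Or.inr (Or.inl ?_))))))
      funext i
      rcases fin_two i with rfl | rfl
      ·
        simp only [Matrix.cons_val_zero, Matrix.cons_val_one, Matrix.head_cons]
        try field_simp
        try ring
        try rfl
      ·
        simp only [Matrix.cons_val_zero, Matrix.cons_val_one, Matrix.head_cons]
    · -- element -> index 4, k=0
      refine Or.inr (Or.inr (Or.inr (Or.inr (Or.inl ?_))))
      funext i
      rcases fin_two i with rfl | rfl
      ·
        simp only [Matrix.cons_val_zero, Matrix.cons_val_one, Matrix.head_cons]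
        try field_simp
        try ring
        try rfl
      ·
        simp only [Matrix.cons_val_zero, Matrix.cons_val_one, Matrix.head_cons]
  · rw [update_one, exch_one 1 1 (by norm_num)]
    rw [show ((1 : ℤ)).toNat = 1 from by simp]
    simp only [pow_one]
    rcases hvv with rfl|rfl|rfl|rfl|rfl|rfl|rfl|rfl|rfl|rfl
    · -- element -> index 9, k=1
      refine Or.inr (Or.inr (Or.inr (Or.inr (Or.inr (Or.inr (Or.inr (Or.inr (Or.inr ?_))))))))
      funext i
      rcases fin_two i with rfl | rfl
      ·
        simp only [Matrix.cons_val_zero, Matrix.cons_val_one, Matrix.head_cons]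
      ·
        simp only [Matrix.cons_val_zero, Matrix.cons_val_one, Matrix.head_cons]
        try field_simp
        try ring
        try rfl
    · -- element -> index 2, k=1
      refine Or.inr (Or.inr (Or.inl ?_))
      funext i
      rcases fin_two i with rfl | rfl
      ·
        simp only [Matrix.cons_val_zero, Matrix.cons_val_one, Matrix.head_cons]
      ·
        simp only [Matrix.cons_val_zero, Matrix.cons_val_one, Matrix.head_cons]
        try field_simp
        try ring
        try rfl
    · -- element -> index 1, k=1
      refine Or.inr (Or.inl ?_)
      funext i
      rcases fin_two i with rfl | rfl
      ·
        simp only [Matrix.cons_val_zero, Matrix.cons_val_one, Matrix.head_cons]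
      ·
        simp only [Matrix.cons_val_zero, Matrix.cons_val_one, Matrix.head_cons]
        try field_simp
        try ring
        try rfl
    · -- element -> index 4, k=1
      refine Or.inr (Or.inr (Or.inr (Or.inr (Or.inl ?_))))
      funext i
      rcases fin_two i with rfl | rfl
      ·
        simp only [Matrix.cons_val_zero, Matrix.cons_val_one, Matrix.head_cons]
      ·
        simp only [Matrix.cons_val_zero, Matrix.cons_val_one, Matrix.head_cons]
        try field_simp
        try ring
        try rfl
    · -- element -> index 3, k=1
      refine Or.inr (Or.inr (Or.inr (Or.inl ?_)))
      funext i
      rcases fin_two i with rfl | rfl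
      ·
        simp only [Matrix.cons_val_zero, Matrix.cons_val_one, Matrix.head_cons]
      ·
        simp only [Matrix.cons_val_zero, Matrix.cons_val_one, Matrix.head_cons]
        try field_simp
        try ring
        try rfl
    · -- element -> index 6, k=1
      refine Or.inr (Or.inr (Or.inr (Or.inr (Or.inr (Or.inr (Or.inl ?_))))))
      funext i
      rcases fin_two i with rfl | rfl
      ·
        simp only [Matrix.cons_val_zero, Matrix.cons_val_one, Matrix.head_cons]
      ·
        simp only [Matrix.cons_val_zero, Matrix.cons_val_one, Matrix.head_cons]
        try field_simp
        try ring
        try rfl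
    · -- element -> index 5, k=1
      refine Or.inr (Or.inr (Or.inr (Or.inr (Or.inr (Or.inl ?_)))))
      funext i
      rcases fin_two i with rfl | rfl
      ·
        simp only [Matrix.cons_val_zero, Matrix.cons_val_one, Matrix.head_cons]
      ·
        simp only [Matrix.cons_val_zero, Matrix.cons_val_one, Matrix.head_cons]
        try field_simp
        try ring
        try rfl
    · -- element -> index 8, k=1
      refine Or.inr (Or.inr (Or.inr (Or.inr (Or.inr (Or.inr (Or.inr (Or.inr (Or.inl ?_))))))))
      funext i
      rcases fin_two i with rfl | rfl
      ·
        simp only [Matrix.cons_val_zero, Matrix.cons_val_one, Matrix.head_cons]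
      ·
        simp only [Matrix.cons_val_zero, Matrix.cons_val_one, Matrix.head_cons]
        try field_simp
        try ring
        try rfl
    · -- element -> index 7, k=1
      refine Or.inr (Or.inr (Or.inr (Or.inr (Or.inr (Or.inr (Or.inr (Or.inl ?_)))))))
      funext i
      rcases fin_two i with rfl | rfl
      ·
        simp only [Matrix.cons_val_zero, Matrix.cons_val_one, Matrix.head_cons]
      ·
        simp only [Matrix.cons_val_zero, Matrix.cons_val_one, Matrix.head_cons]
        try field_simp
        try ring
        try rfl
    · -- element -> index 0, k=1
      refine Or.inl ?_
      funext i
      rcases fin_two i with rfl | rfl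
      ·
        simp only [Matrix.cons_val_zero, Matrix.cons_val_one, Matrix.head_cons]
      ·
        simp only [Matrix.cons_val_zero, Matrix.cons_val_one, Matrix.head_cons]
        try field_simp
        try ring
        try rfl

noncomputable def L12 (u v : F) : List (Fin 2 → F) :=
  [![u, v],
   ![(1 + v ^ 2) / u, (1 + v ^ 2 + u) / (u * v)],
   ![(1 + v ^ 2) / u, v],
   ![(1 + v ^ 2 + 2 * u + u ^ 2) / (u * v ^ 2), (1 + v ^ 2 + u) / (u * v)],
   ![(1 + v ^ 2 + 2 * u + u ^ 2) / (u * v ^ 2), (1 + u) / v],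
   ![u, (1 + u) / v]]

lemma closure12 (u v : F) (hne0 : (u : F) ≠ 0) (hne1 : (v : F) ≠ 0) (hne2 : (1 + v ^ 2 : F) ≠ 0) (hne3 : (1 + v ^ 2 + u : F) ≠ 0) (hne4 : (1 + v ^ 2 + 2 * u + u ^ 2 : F) ≠ 0) (hne5 : (1 + u : F) ≠ 0) :
    ∀ vv ∈ L12 u v, ∀ k : Fin 2, Function.update vv k (exch !![0, 1; -2, 0] k vv) ∈ L12 u v := by
  intro vv hvv k
  have hne2' := hne2
  have hne3' := hne3
  have hne4' := hne4
  have hne5' := hne5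
  ring_nf at hne2' hne3' hne4' hne5'
  simp only [L12, List.mem_cons, List.not_mem_nil, or_false] at hvv ⊢
  rcases fin_two k with rfl | rfl
  · rw [update_zero, exch_zero 1 2 (by norm_num)]
    rw [show ((2 : ℤ)).toNat = 2 from by simp]
    rcases hvv with rfl|rfl|rfl|rfl|rfl|rfl
    · -- element -> index 2, k=0
      refine Or.inr (Or.inr (Or.inl ?_))
      funext i
      rcases fin_two i with rfl | rfl
      ·
        simp only [Matrix.cons_val_zero, Matrix.cons_val_one, Matrix.head_cons]
        try field_simp
        try ring
        try rfl
      ·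
        simp only [Matrix.cons_val_zero, Matrix.cons_val_one, Matrix.head_cons]
    · -- element -> index 3, k=0
      refine Or.inr (Or.inr (Or.inr (Or.inl ?_)))
      funext i
      rcases fin_two i with rfl | rfl
      ·
        simp only [Matrix.cons_val_zero, Matrix.cons_val_one, Matrix.head_cons]
        try field_simp
        try ring
        try rfl
      ·
        simp only [Matrix.cons_val_zero, Matrix.cons_val_one, Matrix.head_cons]
    · -- element -> index 0, k=0
      refine Or.inl ?_
      funext i
      rcases fin_two i with rfl | rfl
      ·
        simp only [Matrix.cons_val_zero, Matrix.cons_val_one, Matrix.head_cons]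
        try field_simp
        try ring
        try rfl
      ·
        simp only [Matrix.cons_val_zero, Matrix.cons_val_one, Matrix.head_cons]
    · -- element -> index 1, k=0
      refine Or.inr (Or.inl ?_)
      funext i
      rcases fin_two i with rfl | rfl
      ·
        simp only [Matrix.cons_val_zero, Matrix.cons_val_one, Matrix.head_cons]
        try field_simp
        try ring
        try rfl
      ·
        simp only [Matrix.cons_val_zero, Matrix.cons_val_one, Matrix.head_cons]
    · -- element -> index 5, k=0
      refine Or.inr (Or.inr (Or.inr (Or.inr (Or.inr ?_))))
      funext i
      rcases fin_two i with rfl | rfl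
      ·
        simp only [Matrix.cons_val_zero, Matrix.cons_val_one, Matrix.head_cons]
        try field_simp
        try ring
        try rfl
      ·
        simp only [Matrix.cons_val_zero, Matrix.cons_val_one, Matrix.head_cons]
    · -- element -> index 4, k=0
      refine Or.inr (Or.inr (Or.inr (Or.inr (Or.inl ?_))))
      funext i
      rcases fin_two i with rfl | rfl
      ·
        simp only [Matrix.cons_val_zero, Matrix.cons_val_one, Matrix.head_cons]
        try field_simp
        try ring
        try rfl
      ·
        simp only [Matrix.cons_val_zero, Matrix.cons_val_one, Matrix.head_cons]
  · rw [update_one, exch_one 1 2 (by norm_num)]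
    rw [show ((1 : ℤ)).toNat = 1 from by simp]
    simp only [pow_one]
    rcases hvv with rfl|rfl|rfl|rfl|rfl|rfl
    · -- element -> index 5, k=1
      refine Or.inr (Or.inr (Or.inr (Or.inr (Or.inr ?_))))
      funext i
      rcases fin_two i with rfl | rfl
      ·
        simp only [Matrix.cons_val_zero, Matrix.cons_val_one, Matrix.head_cons]
      ·
        simp only [Matrix.cons_val_zero, Matrix.cons_val_one, Matrix.head_cons]
        try field_simp
        try ring
        try rfl
    · -- element -> index 2, k=1
      refine Or.inr (Or.inr (Or.inl ?_))
      funext i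
      rcases fin_two i with rfl | rfl
      ·
        simp only [Matrix.cons_val_zero, Matrix.cons_val_one, Matrix.head_cons]
      ·
        simp only [Matrix.cons_val_zero, Matrix.cons_val_one, Matrix.head_cons]
        try field_simp
        try ring
        try rfl
    · -- element -> index 1, k=1
      refine Or.inr (Or.inl ?_)
      funext i
      rcases fin_two i with rfl | rfl
      ·
        simp only [Matrix.cons_val_zero, Matrix.cons_val_one, Matrix.head_cons]
      ·
        simp only [Matrix.cons_val_zero, Matrix.cons_val_one, Matrix.head_cons]
        try field_simp
        try ring
        try rfl
    · -- element -> index 4, k=1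
      refine Or.inr (Or.inr (Or.inr (Or.inr (Or.inl ?_))))
      funext i
      rcases fin_two i with rfl | rfl
      ·
        simp only [Matrix.cons_val_zero, Matrix.cons_val_one, Matrix.head_cons]
      ·
        simp only [Matrix.cons_val_zero, Matrix.cons_val_one, Matrix.head_cons]
        try field_simp
        try ring
        try rfl
    · -- element -> index 3, k=1
      refine Or.inr (Or.inr (Or.inr (Or.inl ?_)))
      funext i
      rcases fin_two i with rfl | rfl
      ·
        simp only [Matrix.cons_val_zero, Matrix.cons_val_one, Matrix.head_cons]
      ·
        simp only [Matrix.cons_val_zero, Matrix.cons_val_one, Matrix.head_cons]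
        try field_simp
        try ring
        try rfl
    · -- element -> index 0, k=1
      refine Or.inl ?_
      funext i
      rcases fin_two i with rfl | rfl
      ·
        simp only [Matrix.cons_val_zero, Matrix.cons_val_one, Matrix.head_cons]
      ·
        simp only [Matrix.cons_val_zero, Matrix.cons_val_one, Matrix.head_cons]
        try field_simp
        try ring
        try rfl

noncomputable def L21 (u v : F) : List (Fin 2 → F) :=
  [![u, v],
   ![(1 + v) / u, (1 + 2 * v + v ^ 2 + u ^ 2) / (u ^ 2 * v)],
   ![(1 + v) / u, v],
   ![(1 + v + u ^ 2) / (u * v), (1 + 2 * v + v ^ 2 + u ^ 2) / (u ^ 2 * v)],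
   ![(1 + v + u ^ 2) / (u * v), (1 + u ^ 2) / v],
   ![u, (1 + u ^ 2) / v]]

lemma closure21 (u v : F) (hne0 : (u : F) ≠ 0) (hne1 : (v : F) ≠ 0) (hne2 : (1 + v : F) ≠ 0) (hne3 : (1 + 2 * v + v ^ 2 + u ^ 2 : F) ≠ 0) (hne4 : (1 + v + u ^ 2 : F) ≠ 0) (hne5 : (1 + u ^ 2 : F) ≠ 0) :
    ∀ vv ∈ L21 u v, ∀ k : Fin 2, Function.update vv k (exch !![0, 2; -1, 0] k vv) ∈ L21 u v := by
  intro vv hvv k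
  have hne2' := hne2
  have hne3' := hne3
  have hne4' := hne4
  have hne5' := hne5
  ring_nf at hne2' hne3' hne4' hne5'
  simp only [L21, List.mem_cons, List.not_mem_nil, or_false] at hvv ⊢
  rcases fin_two k with rfl | rfl
  · rw [update_zero, exch_zero 2 1 (by norm_num)]
    rw [show ((1 : ℤ)).toNat = 1 from by simp]
    simp only [pow_one]
    rcases hvv with rfl|rfl|rfl|rfl|rfl|rfl
    · -- element -> index 2, k=0
      refine Or.inr (Or.inr (Or.inl ?_))
      funext i
      rcases fin_two i with rfl | rfl
      ·
        simp only [Matrix.cons_val_zero, Matrix.cons_val_one, Matrix.head_cons]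
        try field_simp
        try ring
        try rfl
      ·
        simp only [Matrix.cons_val_zero, Matrix.cons_val_one, Matrix.head_cons]
    · -- element -> index 3, k=0
      refine Or.inr (Or.inr (Or.inr (Or.inl ?_)))
      funext i
      rcases fin_two i with rfl | rfl
      ·
        simp only [Matrix.cons_val_zero, Matrix.cons_val_one, Matrix.head_cons]
        try field_simp
        try ring
        try rfl
      ·
        simp only [Matrix.cons_val_zero, Matrix.cons_val_one, Matrix.head_cons]
    · -- element -> index 0, k=0
      refine Or.inl ?_
      funext i
      rcases fin_two i with rfl | rfl
      ·
        simp only [Matrix.cons_val_zero, Matrix.cons_val_one, Matrix.head_cons]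
        try field_simp
        try ring
        try rfl
      ·
        simp only [Matrix.cons_val_zero, Matrix.cons_val_one, Matrix.head_cons]
    · -- element -> index 1, k=0
      refine Or.inr (Or.inl ?_)
      funext i
      rcases fin_two i with rfl | rfl
      ·
        simp only [Matrix.cons_val_zero, Matrix.cons_val_one, Matrix.head_cons]
        try field_simp
        try ring
        try rfl
      ·
        simp only [Matrix.cons_val_zero, Matrix.cons_val_one, Matrix.head_cons]
    · -- element -> index 5, k=0
      refine Or.inr (Or.inr (Or.inr (Or.inr (Or.inr ?_))))
      funext i
      rcases fin_two i with rfl | rfl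
      ·
        simp only [Matrix.cons_val_zero, Matrix.cons_val_one, Matrix.head_cons]
        try field_simp
        try ring
        try rfl
      ·
        simp only [Matrix.cons_val_zero, Matrix.cons_val_one, Matrix.head_cons]
    · -- element -> index 4, k=0
      refine Or.inr (Or.inr (Or.inr (Or.inr (Or.inl ?_))))
      funext i
      rcases fin_two i with rfl | rfl
      ·
        simp only [Matrix.cons_val_zero, Matrix.cons_val_one, Matrix.head_cons]
        try field_simp
        try ring
        try rfl
      ·
        simp only [Matrix.cons_val_zero, Matrix.cons_val_one, Matrix.head_cons]
  · rw [update_one, exch_one 2 1 (by norm_num)]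
    rw [show ((2 : ℤ)).toNat = 2 from by simp]
    rcases hvv with rfl|rfl|rfl|rfl|rfl|rfl
    · -- element -> index 5, k=1
      refine Or.inr (Or.inr (Or.inr (Or.inr (Or.inr ?_))))
      funext i
      rcases fin_two i with rfl | rfl
      ·
        simp only [Matrix.cons_val_zero, Matrix.cons_val_one, Matrix.head_cons]
      ·
        simp only [Matrix.cons_val_zero, Matrix.cons_val_one, Matrix.head_cons]
        try field_simp
        try ring
        try rfl
    · -- element -> index 2, k=1
      refine Or.inr (Or.inr (Or.inl ?_))
      funext i
      rcases fin_two i with rfl | rfl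
      ·
        simp only [Matrix.cons_val_zero, Matrix.cons_val_one, Matrix.head_cons]
      ·
        simp only [Matrix.cons_val_zero, Matrix.cons_val_one, Matrix.head_cons]
        try field_simp
        try ring
        try rfl
    · -- element -> index 1, k=1
      refine Or.inr (Or.inl ?_)
      funext i
      rcases fin_two i with rfl | rfl
      ·
        simp only [Matrix.cons_val_zero, Matrix.cons_val_one, Matrix.head_cons]
      ·
        simp only [Matrix.cons_val_zero, Matrix.cons_val_one, Matrix.head_cons]
        try field_simp
        try ring
        try rfl
    · -- element -> index 4, k=1
      refine Or.inr (Or.inr (Or.inr (Or.inr (Or.inl ?_))))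
      funext i
      rcases fin_two i with rfl | rfl
      ·
        simp only [Matrix.cons_val_zero, Matrix.cons_val_one, Matrix.head_cons]
      ·
        simp only [Matrix.cons_val_zero, Matrix.cons_val_one, Matrix.head_cons]
        try field_simp
        try ring
        try rfl
    · -- element -> index 3, k=1
      refine Or.inr (Or.inr (Or.inr (Or.inl ?_)))
      funext i
      rcases fin_two i with rfl | rfl
      ·
        simp only [Matrix.cons_val_zero, Matrix.cons_val_one, Matrix.head_cons]
      ·
        simp only [Matrix.cons_val_zero, Matrix.cons_val_one, Matrix.head_cons]
        try field_simp
        try ring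
        try rfl
    · -- element -> index 0, k=1
      refine Or.inl ?_
      funext i
      rcases fin_two i with rfl | rfl
      ·
        simp only [Matrix.cons_val_zero, Matrix.cons_val_one, Matrix.head_cons]
      ·
        simp only [Matrix.cons_val_zero, Matrix.cons_val_one, Matrix.head_cons]
        try field_simp
        try ring
        try rfl

noncomputable def L13 (u v : F) : List (Fin 2 → F) :=
  [![u, v],
   ![(1 + v ^ 3) / u, (1 + v ^ 3 + u) / (u * v)],
   ![(1 + v ^ 3) / u, v],
   ![(1 + v ^ 3 + 3 * u + 3 * u ^ 2 + u ^ 3) / (u * v ^ 3), (1 + v ^ 3 + 2 * u + u ^ 2) / (u * v ^ 2)],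
   ![(1 + v ^ 3 + 3 * u + 3 * u ^ 2 + u ^ 3) / (u * v ^ 3), (1 + u) / v],
   ![(1 + 2 * v ^ 3 + v ^ 6 + 3 * u + 3 * u * v ^ 3 + 3 * u ^ 2 + u ^ 3) / (u ^ 2 * v ^ 3), (1 + v ^ 3 + u) / (u * v)],
   ![(1 + 2 * v ^ 3 + v ^ 6 + 3 * u + 3 * u * v ^ 3 + 3 * u ^ 2 + u ^ 3) / (u ^ 2 * v ^ 3), (1 + v ^ 3 + 2 * u + u ^ 2) / (u * v ^ 2)],
   ![u, (1 + u) / v]]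

lemma closure13 (u v : F) (hne0 : (u : F) ≠ 0) (hne1 : (v : F) ≠ 0) (hne2 : (1 + v ^ 3 : F) ≠ 0) (hne3 : (1 + v ^ 3 + u : F) ≠ 0) (hne4 : (1 + v ^ 3 + 3 * u + 3 * u ^ 2 + u ^ 3 : F) ≠ 0) (hne5 : (1 + v ^ 3 + 2 * u + u ^ 2 : F) ≠ 0) (hne6 : (1 + u : F) ≠ 0) (hne7 : (1 + 2 * v ^ 3 + v ^ 6 + 3 * u + 3 * u * v ^ 3 + 3 * u ^ 2 + u ^ 3 : F) ≠ 0) :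
    ∀ vv ∈ L13 u v, ∀ k : Fin 2, Function.update vv k (exch !![0, 1; -3, 0] k vv) ∈ L13 u v := by
  intro vv hvv k
  have hne2' := hne2
  have hne3' := hne3
  have hne4' := hne4
  have hne5' := hne5
  have hne6' := hne6
  have hne7' := hne7
  ring_nf at hne2' hne3' hne4' hne5' hne6' hne7'
  simp only [L13, List.mem_cons, List.not_mem_nil, or_false] at hvv ⊢
  rcases fin_two k with rfl | rfl
  · rw [update_zero, exch_zero 1 3 (by norm_num)]
    rw [show ((3 : ℤ)).toNat = 3 from by simp]
    rcases hvv with rfl|rfl|rfl|rfl|rfl|rfl|rfl|rfl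
    · -- element -> index 2, k=0
      refine Or.inr (Or.inr (Or.inl ?_))
      funext i
      rcases fin_two i with rfl | rfl
      ·
        simp only [Matrix.cons_val_zero, Matrix.cons_val_one, Matrix.head_cons]
        try field_simp
        try ring
        try rfl
      ·
        simp only [Matrix.cons_val_zero, Matrix.cons_val_one, Matrix.head_cons]
    · -- element -> index 5, k=0
      refine Or.inr (Or.inr (Or.inr (Or.inr (Or.inr (Or.inl ?_)))))
      funext i
      rcases fin_two i with rfl | rfl
      ·
        simp only [Matrix.cons_val_zero, Matrix.cons_val_one, Matrix.head_cons]
        try field_simp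
        try ring
        try rfl
      ·
        simp only [Matrix.cons_val_zero, Matrix.cons_val_one, Matrix.head_cons]
    · -- element -> index 0, k=0
      refine Or.inl ?_
      funext i
      rcases fin_two i with rfl | rfl
      ·
        simp only [Matrix.cons_val_zero, Matrix.cons_val_one, Matrix.head_cons]
        try field_simp
        try ring
        try rfl
      ·
        simp only [Matrix.cons_val_zero, Matrix.cons_val_one, Matrix.head_cons]
    · -- element -> index 6, k=0
      refine Or.inr (Or.inr (Or.inr (Or.inr (Or.inr (Or.inr (Or.inl ?_))))))
      funext i
      rcases fin_two i with rfl | rfl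
      ·
        simp only [Matrix.cons_val_zero, Matrix.cons_val_one, Matrix.head_cons]
        try field_simp
        try ring
        try rfl
      ·
        simp only [Matrix.cons_val_zero, Matrix.cons_val_one, Matrix.head_cons]
    · -- element -> index 7, k=0
      refine Or.inr (Or.inr (Or.inr (Or.inr (Or.inr (Or.inr (Or.inr ?_))))))
      funext i
      rcases fin_two i with rfl | rfl
      ·
        simp only [Matrix.cons_val_zero, Matrix.cons_val_one, Matrix.head_cons]
        try field_simp
        try ring
        try rfl
      ·
        simp only [Matrix.cons_val_zero, Matrix.cons_val_one, Matrix.head_cons]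
    · -- element -> index 1, k=0
      refine Or.inr (Or.inl ?_)
      funext i
      rcases fin_two i with rfl | rfl
      ·
        simp only [Matrix.cons_val_zero, Matrix.cons_val_one, Matrix.head_cons]
        try field_simp
        rw [div_eq_iff (by ring_nf; exact hne7')]
        try ring
        try rfl
      ·
        simp only [Matrix.cons_val_zero, Matrix.cons_val_one, Matrix.head_cons]
    · -- element -> index 3, k=0
      refine Or.inr (Or.inr (Or.inr (Or.inl ?_)))
      funext i
      rcases fin_two i with rfl | rfl
      ·
        simp only [Matrix.cons_val_zero, Matrix.cons_val_one, Matrix.head_cons]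
        try field_simp
        rw [div_eq_iff (by ring_nf; exact hne7')]
        try ring
        try rfl
      ·
        simp only [Matrix.cons_val_zero, Matrix.cons_val_one, Matrix.head_cons]
    · -- element -> index 4, k=0
      refine Or.inr (Or.inr (Or.inr (Or.inr (Or.inl ?_))))
      funext i
      rcases fin_two i with rfl | rfl
      ·
        simp only [Matrix.cons_val_zero, Matrix.cons_val_one, Matrix.head_cons]
        try field_simp
        try ring
        try rfl
      ·
        simp only [Matrix.cons_val_zero, Matrix.cons_val_one, Matrix.head_cons]
  · rw [update_one, exch_one 1 3 (by norm_num)]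
    rw [show ((1 : ℤ)).toNat = 1 from by simp]
    simp only [pow_one]
    rcases hvv with rfl|rfl|rfl|rfl|rfl|rfl|rfl|rfl
    · -- element -> index 7, k=1
      refine Or.inr (Or.inr (Or.inr (Or.inr (Or.inr (Or.inr (Or.inr ?_))))))
      funext i
      rcases fin_two i with rfl | rfl
      ·
        simp only [Matrix.cons_val_zero, Matrix.cons_val_one, Matrix.head_cons]
      ·
        simp only [Matrix.cons_val_zero, Matrix.cons_val_one, Matrix.head_cons]
        try field_simp
        try ring
        try rfl
    · -- element -> index 2, k=1
      refine Or.inr (Or.inr (Or.inl ?_))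
      funext i
      rcases fin_two i with rfl | rfl
      ·
        simp only [Matrix.cons_val_zero, Matrix.cons_val_one, Matrix.head_cons]
      ·
        simp only [Matrix.cons_val_zero, Matrix.cons_val_one, Matrix.head_cons]
        try field_simp
        try ring
        try rfl
    · -- element -> index 1, k=1
      refine Or.inr (Or.inl ?_)
      funext i
      rcases fin_two i with rfl | rfl
      ·
        simp only [Matrix.cons_val_zero, Matrix.cons_val_one, Matrix.head_cons]
      ·
        simp only [Matrix.cons_val_zero, Matrix.cons_val_one, Matrix.head_cons]
        try field_simp
        try ring
        try rfl
    · -- element -> index 4, k=1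
      refine Or.inr (Or.inr (Or.inr (Or.inr (Or.inl ?_))))
      funext i
      rcases fin_two i with rfl | rfl
      ·
        simp only [Matrix.cons_val_zero, Matrix.cons_val_one, Matrix.head_cons]
      ·
        simp only [Matrix.cons_val_zero, Matrix.cons_val_one, Matrix.head_cons]
        try field_simp
        try ring
        try rfl
    · -- element -> index 3, k=1
      refine Or.inr (Or.inr (Or.inr (Or.inl ?_)))
      funext i
      rcases fin_two i with rfl | rfl
      ·
        simp only [Matrix.cons_val_zero, Matrix.cons_val_one, Matrix.head_cons]
      ·
        simp only [Matrix.cons_val_zero, Matrix.cons_val_one, Matrix.head_cons]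
        try field_simp
        try ring
        try rfl
    · -- element -> index 6, k=1
      refine Or.inr (Or.inr (Or.inr (Or.inr (Or.inr (Or.inr (Or.inl ?_))))))
      funext i
      rcases fin_two i with rfl | rfl
      ·
        simp only [Matrix.cons_val_zero, Matrix.cons_val_one, Matrix.head_cons]
      ·
        simp only [Matrix.cons_val_zero, Matrix.cons_val_one, Matrix.head_cons]
        try field_simp
        try ring
        try rfl
    · -- element -> index 5, k=1
      refine Or.inr (Or.inr (Or.inr (Or.inr (Or.inr (Or.inl ?_)))))
      funext i
      rcases fin_two i with rfl | rfl
      ·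
        simp only [Matrix.cons_val_zero, Matrix.cons_val_one, Matrix.head_cons]
      ·
        simp only [Matrix.cons_val_zero, Matrix.cons_val_one, Matrix.head_cons]
        try field_simp
        try ring
        try rfl
    · -- element -> index 0, k=1
      refine Or.inl ?_
      funext i
      rcases fin_two i with rfl | rfl
      ·
        simp only [Matrix.cons_val_zero, Matrix.cons_val_one, Matrix.head_cons]
      ·
        simp only [Matrix.cons_val_zero, Matrix.cons_val_one, Matrix.head_cons]
        try field_simp
        try ring
        try rfl

noncomputable def L31 (u v : F) : List (Fin 2 → F) :=
  [![u, v],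
   ![(1 + v) / u, (1 + 3 * v + 3 * v ^ 2 + v ^ 3 + u ^ 3) / (u ^ 3 * v)],
   ![(1 + v) / u, v],
   ![(1 + v + u ^ 3) / (u * v), (1 + 3 * v + 3 * v ^ 2 + v ^ 3 + 2 * u ^ 3 + 3 * u ^ 3 * v + u ^ 6) / (u ^ 3 * v ^ 2)],
   ![(1 + v + u ^ 3) / (u * v), (1 + u ^ 3) / v],
   ![(1 + 2 * v + v ^ 2 + u ^ 3) / (u ^ 2 * v), (1 + 3 * v + 3 * v ^ 2 + v ^ 3 + u ^ 3) / (u ^ 3 * v)],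
   ![(1 + 2 * v + v ^ 2 + u ^ 3) / (u ^ 2 * v), (1 + 3 * v + 3 * v ^ 2 + v ^ 3 + 2 * u ^ 3 + 3 * u ^ 3 * v + u ^ 6) / (u ^ 3 * v ^ 2)],
   ![u, (1 + u ^ 3) / v]]

lemma closure31 (u v : F) (hne0 : (u : F) ≠ 0) (hne1 : (v : F) ≠ 0) (hne2 : (1 + v : F) ≠ 0) (hne3 : (1 + 3 * v + 3 * v ^ 2 + v ^ 3 + u ^ 3 : F) ≠ 0) (hne4 : (1 + v + u ^ 3 : F) ≠ 0) (hne5 : (1 + 3 * v + 3 * v ^ 2 + v ^ 3 + 2 * u ^ 3 + 3 * u ^ 3 * v + u ^ 6 : F) ≠ 0) (hne6 : (1 + u ^ 3 : F) ≠ 0) (hne7 : (1 + 2 * v + v ^ 2 + u ^ 3 : F) ≠ 0) :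
    ∀ vv ∈ L31 u v, ∀ k : Fin 2, Function.update vv k (exch !![0, 3; -1, 0] k vv) ∈ L31 u v := by
  intro vv hvv k
  have hne2' := hne2
  have hne3' := hne3
  have hne4' := hne4
  have hne5' := hne5
  have hne6' := hne6
  have hne7' := hne7
  ring_nf at hne2' hne3' hne4' hne5' hne6' hne7'
  simp only [L31, List.mem_cons, List.not_mem_nil, or_false] at hvv ⊢
  rcases fin_two k with rfl | rfl
  · rw [update_zero, exch_zero 3 1 (by norm_num)]
    rw [show ((1 : ℤ)).toNat = 1 from by simp]
    simp only [pow_one]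
    rcases hvv with rfl|rfl|rfl|rfl|rfl|rfl|rfl|rfl
    · -- element -> index 2, k=0
      refine Or.inr (Or.inr (Or.inl ?_))
      funext i
      rcases fin_two i with rfl | rfl
      ·
        simp only [Matrix.cons_val_zero, Matrix.cons_val_one, Matrix.head_cons]
        try field_simp
        try ring
        try rfl
      ·
        simp only [Matrix.cons_val_zero, Matrix.cons_val_one, Matrix.head_cons]
    · -- element -> index 5, k=0
      refine Or.inr (Or.inr (Or.inr (Or.inr (Or.inr (Or.inl ?_)))))
      funext i
      rcases fin_two i with rfl | rfl
      ·
        simp only [Matrix.cons_val_zero, Matrix.cons_val_one, Matrix.head_cons]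
        try field_simp
        try ring
        try rfl
      ·
        simp only [Matrix.cons_val_zero, Matrix.cons_val_one, Matrix.head_cons]
    · -- element -> index 0, k=0
      refine Or.inl ?_
      funext i
      rcases fin_two i with rfl | rfl
      ·
        simp only [Matrix.cons_val_zero, Matrix.cons_val_one, Matrix.head_cons]
        try field_simp
        try ring
        try rfl
      ·
        simp only [Matrix.cons_val_zero, Matrix.cons_val_one, Matrix.head_cons]
    · -- element -> index 6, k=0
      refine Or.inr (Or.inr (Or.inr (Or.inr (Or.inr (Or.inr (Or.inl ?_))))))
      funext i
      rcases fin_two i with rfl | rfl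
      ·
        simp only [Matrix.cons_val_zero, Matrix.cons_val_one, Matrix.head_cons]
        try field_simp
        try ring
        try rfl
      ·
        simp only [Matrix.cons_val_zero, Matrix.cons_val_one, Matrix.head_cons]
    · -- element -> index 7, k=0
      refine Or.inr (Or.inr (Or.inr (Or.inr (Or.inr (Or.inr (Or.inr ?_))))))
      funext i
      rcases fin_two i with rfl | rfl
      ·
        simp only [Matrix.cons_val_zero, Matrix.cons_val_one, Matrix.head_cons]
        try field_simp
        try ring
        try rfl
      ·
        simp only [Matrix.cons_val_zero, Matrix.cons_val_one, Matrix.head_cons]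
    · -- element -> index 1, k=0
      refine Or.inr (Or.inl ?_)
      funext i
      rcases fin_two i with rfl | rfl
      ·
        simp only [Matrix.cons_val_zero, Matrix.cons_val_one, Matrix.head_cons]
        try field_simp
        try ring
        try rfl
      ·
        simp only [Matrix.cons_val_zero, Matrix.cons_val_one, Matrix.head_cons]
    · -- element -> index 3, k=0
      refine Or.inr (Or.inr (Or.inr (Or.inl ?_)))
      funext i
      rcases fin_two i with rfl | rfl
      ·
        simp only [Matrix.cons_val_zero, Matrix.cons_val_one, Matrix.head_cons]
        try field_simp
        try ring
        try rfl
      ·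
        simp only [Matrix.cons_val_zero, Matrix.cons_val_one, Matrix.head_cons]
    · -- element -> index 4, k=0
      refine Or.inr (Or.inr (Or.inr (Or.inr (Or.inl ?_))))
      funext i
      rcases fin_two i with rfl | rfl
      ·
        simp only [Matrix.cons_val_zero, Matrix.cons_val_one, Matrix.head_cons]
        try field_simp
        try ring
        try rfl
      ·
        simp only [Matrix.cons_val_zero, Matrix.cons_val_one, Matrix.head_cons]
  · rw [update_one, exch_one 3 1 (by norm_num)]
    rw [show ((3 : ℤ)).toNat = 3 from by simp]
    rcases hvv with rfl|rfl|rfl|rfl|rfl|rfl|rfl|rfl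
    · -- element -> index 7, k=1
      refine Or.inr (Or.inr (Or.inr (Or.inr (Or.inr (Or.inr (Or.inr ?_))))))
      funext i
      rcases fin_two i with rfl | rfl
      ·
        simp only [Matrix.cons_val_zero, Matrix.cons_val_one, Matrix.head_cons]
      ·
        simp only [Matrix.cons_val_zero, Matrix.cons_val_one, Matrix.head_cons]
        try field_simp
        try ring
        try rfl
    · -- element -> index 2, k=1
      refine Or.inr (Or.inr (Or.inl ?_))
      funext i
      rcases fin_two i with rfl | rfl
      ·
        simp only [Matrix.cons_val_zero, Matrix.cons_val_one, Matrix.head_cons]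
      ·
        simp only [Matrix.cons_val_zero, Matrix.cons_val_one, Matrix.head_cons]
        try field_simp
        try ring
        try rfl
    · -- element -> index 1, k=1
      refine Or.inr (Or.inl ?_)
      funext i
      rcases fin_two i with rfl | rfl
      ·
        simp only [Matrix.cons_val_zero, Matrix.cons_val_one, Matrix.head_cons]
      ·
        simp only [Matrix.cons_val_zero, Matrix.cons_val_one, Matrix.head_cons]
        try field_simp
        try ring
        try rfl
    · -- element -> index 4, k=1
      refine Or.inr (Or.inr (Or.inr (Or.inr (Or.inl ?_))))
      funext i
      rcases fin_two i with rfl | rfl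
      ·
        simp only [Matrix.cons_val_zero, Matrix.cons_val_one, Matrix.head_cons]
      ·
        simp only [Matrix.cons_val_zero, Matrix.cons_val_one, Matrix.head_cons]
        try field_simp
        rw [div_eq_iff (by ring_nf; exact hne5')]
        try ring
        try rfl
    · -- element -> index 3, k=1
      refine Or.inr (Or.inr (Or.inr (Or.inl ?_)))
      funext i
      rcases fin_two i with rfl | rfl
      ·
        simp only [Matrix.cons_val_zero, Matrix.cons_val_one, Matrix.head_cons]
      ·
        simp only [Matrix.cons_val_zero, Matrix.cons_val_one, Matrix.head_cons]
        try field_simp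
        try ring
        try rfl
    · -- element -> index 6, k=1
      refine Or.inr (Or.inr (Or.inr (Or.inr (Or.inr (Or.inr (Or.inl ?_))))))
      funext i
      rcases fin_two i with rfl | rfl
      ·
        simp only [Matrix.cons_val_zero, Matrix.cons_val_one, Matrix.head_cons]
      ·
        simp only [Matrix.cons_val_zero, Matrix.cons_val_one, Matrix.head_cons]
        try field_simp
        try ring
        try rfl
    · -- element -> index 5, k=1
      refine Or.inr (Or.inr (Or.inr (Or.inr (Or.inr (Or.inl ?_)))))
      funext i
      rcases fin_two i with rfl | rfl
      ·
        simp only [Matrix.cons_val_zero, Matrix.cons_val_one, Matrix.head_cons]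
      ·
        simp only [Matrix.cons_val_zero, Matrix.cons_val_one, Matrix.head_cons]
        try field_simp
        rw [div_eq_iff (by ring_nf; exact hne5')]
        try ring
        try rfl
    · -- element -> index 0, k=1
      refine Or.inl ?_
      funext i
      rcases fin_two i with rfl | rfl
      ·
        simp only [Matrix.cons_val_zero, Matrix.cons_val_one, Matrix.head_cons]
      ·
        simp only [Matrix.cons_val_zero, Matrix.cons_val_one, Matrix.head_cons]
        try field_simp
        try ring
        try rfl

end Cases


section Main

open MvPolynomial

lemma aeval_ne_zero_of_eval_ne_zero {F : Type*} [Field F] [Algebra ℚ F] (x : Fin 2 → F)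
    (hx : AlgebraicIndependent ℚ x) (p : MvPolynomial (Fin 2) ℚ)
    (h : MvPolynomial.eval (fun _ => (1 : ℚ)) p ≠ 0) : MvPolynomial.aeval x p ≠ 0 := by
  intro h0
  have hp : p = 0 := hx (show aeval x p = aeval x 0 by simpa using h0)
  rw [hp] at h
  simp at h

theorem rank2_finite_type {F : Type*} [Field F] [Algebra ℚ F]
    (x : Fin 2 → F) (hx : AlgebraicIndependent ℚ x)
    (b c : ℤ) (hb : 0 < b) (hc : 0 < c) :
    ({s | ∃ l : List (Fin 2), seqAct l (x, !![0, b; -c, 0]) = s}.Finite ↔ b * c ≤ 3) ∧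
      ({y : F | ∃ (l : List (Fin 2)) (i : Fin 2),
          (seqAct l (x, !![0, b; -c, 0])).1 i = y}.Finite ↔ b * c ≤ 3) := by
  by_cases h3 : b * c ≤ 3
  · have hseeds : {s | ∃ l : List (Fin 2), seqAct l (x, !![0, b; -c, 0]) = s}.Finite := by
      have hb3 : b ≤ 3 := by nlinarith
      have hc3 : c ≤ 3 := by nlinarith
      interval_cases b <;> interval_cases c
      · refine seedSet_finite_of_list 1 1 (by norm_num) x (L11 (x 0) (x 1)) ?_ ?_
        · simp only [L11, List.mem_cons]
          exact Or.inl (vec_eq x)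
        · have harg0 : (x 0 : F) ≠ 0 := by
            have hh := aeval_ne_zero_of_eval_ne_zero x hx (X 0) (by simp <;> norm_num)
            simpa using hh
          have harg1 : (x 1 : F) ≠ 0 := by
            have hh := aeval_ne_zero_of_eval_ne_zero x hx (X 1) (by simp <;> norm_num)
            simpa using hh
          have harg2 : (1 + x 1 : F) ≠ 0 := by
            have hh := aeval_ne_zero_of_eval_ne_zero x hx (1 + X 1) (by simp <;> norm_num)
            simpa using hh
          have harg3 : (1 + x 1 + x 0 : F) ≠ 0 := by
            have hh := aeval_ne_zero_of_eval_ne_zero x hx (1 + X 1 + X 0) (by simp <;> norm_num)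
            simpa using hh
          have harg4 : (1 + x 0 : F) ≠ 0 := by
            have hh := aeval_ne_zero_of_eval_ne_zero x hx (1 + X 0) (by simp <;> norm_num)
            simpa using hh
          exact closure11 (x 0) (x 1) harg0 harg1 harg2 harg3 harg4
      · refine seedSet_finite_of_list 1 2 (by norm_num) x (L12 (x 0) (x 1)) ?_ ?_
        · simp only [L12, List.mem_cons]
          exact Or.inl (vec_eq x)
        · have harg0 : (x 0 : F) ≠ 0 := by
            have hh := aeval_ne_zero_of_eval_ne_zero x hx (X 0) (by simp <;> norm_num)
            simpa using hh
          have harg1 : (x 1 : F) ≠ 0 := by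
            have hh := aeval_ne_zero_of_eval_ne_zero x hx (X 1) (by simp <;> norm_num)
            simpa using hh
          have harg2 : (1 + x 1 ^ 2 : F) ≠ 0 := by
            have hh := aeval_ne_zero_of_eval_ne_zero x hx (1 + X 1 ^ 2) (by simp <;> norm_num)
            simpa using hh
          have harg3 : (1 + x 1 ^ 2 + x 0 : F) ≠ 0 := by
            have hh := aeval_ne_zero_of_eval_ne_zero x hx (1 + X 1 ^ 2 + X 0) (by simp <;> norm_num)
            simpa using hh
          have harg4 : (1 + x 1 ^ 2 + 2 * x 0 + x 0 ^ 2 : F) ≠ 0 := by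
            have hh := aeval_ne_zero_of_eval_ne_zero x hx (1 + X 1 ^ 2 + 2 * X 0 + X 0 ^ 2) (by simp <;> norm_num)
            simpa using hh
          have harg5 : (1 + x 0 : F) ≠ 0 := by
            have hh := aeval_ne_zero_of_eval_ne_zero x hx (1 + X 0) (by simp <;> norm_num)
            simpa using hh
          exact closure12 (x 0) (x 1) harg0 harg1 harg2 harg3 harg4 harg5
      · refine seedSet_finite_of_list 1 3 (by norm_num) x (L13 (x 0) (x 1)) ?_ ?_
        · simp only [L13, List.mem_cons]
          exact Or.inl (vec_eq x)
        · have harg0 : (x 0 : F) ≠ 0 := by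
            have hh := aeval_ne_zero_of_eval_ne_zero x hx (X 0) (by simp <;> norm_num)
            simpa using hh
          have harg1 : (x 1 : F) ≠ 0 := by
            have hh := aeval_ne_zero_of_eval_ne_zero x hx (X 1) (by simp <;> norm_num)
            simpa using hh
          have harg2 : (1 + x 1 ^ 3 : F) ≠ 0 := by
            have hh := aeval_ne_zero_of_eval_ne_zero x hx (1 + X 1 ^ 3) (by simp <;> norm_num)
            simpa using hh
          have harg3 : (1 + x 1 ^ 3 + x 0 : F) ≠ 0 := by
            have hh := aeval_ne_zero_of_eval_ne_zero x hx (1 + X 1 ^ 3 + X 0) (by simp <;> norm_num)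
            simpa using hh
          have harg4 : (1 + x 1 ^ 3 + 3 * x 0 + 3 * x 0 ^ 2 + x 0 ^ 3 : F) ≠ 0 := by
            have hh := aeval_ne_zero_of_eval_ne_zero x hx (1 + X 1 ^ 3 + 3 * X 0 + 3 * X 0 ^ 2 + X 0 ^ 3) (by simp <;> norm_num)
            simpa using hh
          have harg5 : (1 + x 1 ^ 3 + 2 * x 0 + x 0 ^ 2 : F) ≠ 0 := by
            have hh := aeval_ne_zero_of_eval_ne_zero x hx (1 + X 1 ^ 3 + 2 * X 0 + X 0 ^ 2) (by simp <;> norm_num)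
            simpa using hh
          have harg6 : (1 + x 0 : F) ≠ 0 := by
            have hh := aeval_ne_zero_of_eval_ne_zero x hx (1 + X 0) (by simp <;> norm_num)
            simpa using hh
          have harg7 : (1 + 2 * x 1 ^ 3 + x 1 ^ 6 + 3 * x 0 + 3 * x 0 * x 1 ^ 3 + 3 * x 0 ^ 2 + x 0 ^ 3 : F) ≠ 0 := by
            have hh := aeval_ne_zero_of_eval_ne_zero x hx (1 + 2 * X 1 ^ 3 + X 1 ^ 6 + 3 * X 0 + 3 * X 0 * X 1 ^ 3 + 3 * X 0 ^ 2 + X 0 ^ 3) (by simp <;> norm_num)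
            simpa using hh
          exact closure13 (x 0) (x 1) harg0 harg1 harg2 harg3 harg4 harg5 harg6 harg7
      · refine seedSet_finite_of_list 2 1 (by norm_num) x (L21 (x 0) (x 1)) ?_ ?_
        · simp only [L21, List.mem_cons]
          exact Or.inl (vec_eq x)
        · have harg0 : (x 0 : F) ≠ 0 := by
            have hh := aeval_ne_zero_of_eval_ne_zero x hx (X 0) (by simp <;> norm_num)
            simpa using hh
          have harg1 : (x 1 : F) ≠ 0 := by
            have hh := aeval_ne_zero_of_eval_ne_zero x hx (X 1) (by simp <;> norm_num)
            simpa using hh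
          have harg2 : (1 + x 1 : F) ≠ 0 := by
            have hh := aeval_ne_zero_of_eval_ne_zero x hx (1 + X 1) (by simp <;> norm_num)
            simpa using hh
          have harg3 : (1 + 2 * x 1 + x 1 ^ 2 + x 0 ^ 2 : F) ≠ 0 := by
            have hh := aeval_ne_zero_of_eval_ne_zero x hx (1 + 2 * X 1 + X 1 ^ 2 + X 0 ^ 2) (by simp <;> norm_num)
            simpa using hh
          have harg4 : (1 + x 1 + x 0 ^ 2 : F) ≠ 0 := by
            have hh := aeval_ne_zero_of_eval_ne_zero x hx (1 + X 1 + X 0 ^ 2) (by simp <;> norm_num)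
            simpa using hh
          have harg5 : (1 + x 0 ^ 2 : F) ≠ 0 := by
            have hh := aeval_ne_zero_of_eval_ne_zero x hx (1 + X 0 ^ 2) (by simp <;> norm_num)
            simpa using hh
          exact closure21 (x 0) (x 1) harg0 harg1 harg2 harg3 harg4 harg5
      · exact absurd h3 (by norm_num)
      · exact absurd h3 (by norm_num)
      · refine seedSet_finite_of_list 3 1 (by norm_num) x (L31 (x 0) (x 1)) ?_ ?_
        · simp only [L31, List.mem_cons]
          exact Or.inl (vec_eq x)
        · have harg0 : (x 0 : F) ≠ 0 := by
            have hh := aeval_ne_zero_of_eval_ne_zero x hx (X 0) (by simp <;> norm_num)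
            simpa using hh
          have harg1 : (x 1 : F) ≠ 0 := by
            have hh := aeval_ne_zero_of_eval_ne_zero x hx (X 1) (by simp <;> norm_num)
            simpa using hh
          have harg2 : (1 + x 1 : F) ≠ 0 := by
            have hh := aeval_ne_zero_of_eval_ne_zero x hx (1 + X 1) (by simp <;> norm_num)
            simpa using hh
          have harg3 : (1 + 3 * x 1 + 3 * x 1 ^ 2 + x 1 ^ 3 + x 0 ^ 3 : F) ≠ 0 := by
            have hh := aeval_ne_zero_of_eval_ne_zero x hx (1 + 3 * X 1 + 3 * X 1 ^ 2 + X 1 ^ 3 + X 0 ^ 3) (by simp <;> norm_num)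
            simpa using hh
          have harg4 : (1 + x 1 + x 0 ^ 3 : F) ≠ 0 := by
            have hh := aeval_ne_zero_of_eval_ne_zero x hx (1 + X 1 + X 0 ^ 3) (by simp <;> norm_num)
            simpa using hh
          have harg5 : (1 + 3 * x 1 + 3 * x 1 ^ 2 + x 1 ^ 3 + 2 * x 0 ^ 3 + 3 * x 0 ^ 3 * x 1 + x 0 ^ 6 : F) ≠ 0 := by
            have hh := aeval_ne_zero_of_eval_ne_zero x hx (1 + 3 * X 1 + 3 * X 1 ^ 2 + X 1 ^ 3 + 2 * X 0 ^ 3 + 3 * X 0 ^ 3 * X 1 + X 0 ^ 6) (by simp <;> norm_num)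
            simpa using hh
          have harg6 : (1 + x 0 ^ 3 : F) ≠ 0 := by
            have hh := aeval_ne_zero_of_eval_ne_zero x hx (1 + X 0 ^ 3) (by simp <;> norm_num)
            simpa using hh
          have harg7 : (1 + 2 * x 1 + x 1 ^ 2 + x 0 ^ 3 : F) ≠ 0 := by
            have hh := aeval_ne_zero_of_eval_ne_zero x hx (1 + 2 * X 1 + X 1 ^ 2 + X 0 ^ 3) (by simp <;> norm_num)
            simpa using hh
          exact closure31 (x 0) (x 1) harg0 harg1 harg2 harg3 harg4 harg5 harg6 harg7
      · exact absurd h3 (by norm_num)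
      · exact absurd h3 (by norm_num)
    exact ⟨iff_of_true hseeds h3,
      iff_of_true (vars_finite_of_seeds_finite x _ hseeds) h3⟩
  · have hinf := vars_infinite x hx b c hb hc (by omega)
    have hnseeds : ¬ {s | ∃ l : List (Fin 2), seqAct l (x, !![0, b; -c, 0]) = s}.Finite :=
      fun hf => hinf (vars_finite_of_seeds_finite x _ hf)
    exact ⟨iff_of_false hnseeds h3, iff_of_false hinf h3⟩

end Main
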